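/- Let k be a coloring of the two-element subsets of the ordinals below 𝔠 with colors {0,1}. Suppose there exists a set S of ordinals below 𝔠 with |S| = 𝔠 such that for every countable A ⊆ S there is an ordinal β < 𝔠 with α < β for all α ∈ A and k({α,β}) = 1 for all α ∈ A. Then there exist disjoint sets A, B of ordinals below 𝔠, each of order type ω₁, with sup A = sup B, such that k({α,β}) = 1 for all α ∈ A, β ∈ B with α < β (i.e., there is an (ω₁;ω₁)-type half graph homogeneous in color 1). -/

import Mathlib

universe u

open Cardinal

/-- `A` is a set of ordinals of order type `ω₁`. -/
def HasOrderTypeOmega1 (A : Set Ordinal.{u}) : Prop :=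
  Ordinal.type ((· < ·) : A → A → Prop) = (Cardinal.aleph 1).ord

section Aux

open Ordinal Set

/-- The image of `Iio ω₁` under a map strictly monotone there has order type `ω₁`. -/
theorem aux_hasOrderTypeOmega1_image (f : Ordinal.{u} → Ordinal.{u})
    (hf : ∀ η ξ, η < ξ → ξ < (aleph 1).ord → f η < f ξ) :
    HasOrderTypeOmega1 (f '' Set.Iio (aleph 1).ord) := by
  set T : Set Ordinal.{u} := Set.Iio (aleph 1).ord with hT
  set g : T → (f '' T) := fun x => ⟨f x.1, Set.mem_image_of_mem f x.2⟩ with hg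
  have hmono : StrictMono g := fun x y h => hf _ _ h y.2
  have hsurj : Function.Surjective g := by
    rintro ⟨_, ξ, hξ, rfl⟩
    exact ⟨⟨ξ, hξ⟩, rfl⟩
  have iso := StrictMono.orderIsoOfSurjective g hmono hsurj
  have h1 : Ordinal.type ((· < ·) : (f '' T) → (f '' T) → Prop)
      = Ordinal.type ((· < ·) : T → T → Prop) := iso.symm.toRelIsoLT.ordinal_type_eq
  have h2 : Ordinal.type ((· < ·) : T → T → Prop) = Ordinal.lift.{u+1} (aleph.{u} 1).ord := by
    rw [← typein_ordinal]; rfl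
  show Ordinal.type _ = _
  rw [h1, h2, lift_ord, lift_aleph]
  norm_num

/-- A set of ordinals of full cardinality `𝔠` is unbounded below `𝔠.ord`. -/
theorem aux_unbdd (S : Set Ordinal.{u}) (hScard : Cardinal.mk S = continuum) :
    ∀ γ < continuum.{u}.ord, ∃ s ∈ S, γ < s := by
  intro γ hγ
  by_contra h
  push_neg at h
  have hsub : S ⊆ Set.Iio (γ + 1) := fun s hs => lt_of_le_of_lt (h s hs) (lt_add_one γ)
  have h1 : Cardinal.mk S ≤ Cardinal.mk (Set.Iio (γ + 1)) := Cardinal.mk_le_mk_of_subset hsub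
  rw [hScard, Ordinal.mk_Iio_ordinal] at h1
  have hsucc : γ + 1 < continuum.{u}.ord := by
    rw [Ordinal.add_one_eq_succ]
    exact (Cardinal.isSuccLimit_ord aleph0_le_continuum).succ_lt hγ
  have h2 : (γ + 1).card < continuum.{u} := Cardinal.lt_ord.mp hsucc
  have h3 : Cardinal.lift.{u+1} (γ + 1).card < Cardinal.lift.{u+1} continuum.{u} :=
    Cardinal.lift_lt.mpr h2
  rw [Cardinal.lift_continuum] at h3
  exact absurd h1 (not_le.mpr h3)

end Aux

/-- Let `k` be a 2-coloring of the pairs of ordinals below `𝔠` (the initial ordinal of the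
continuum).  If there is a set `S` of ordinals below `𝔠` of cardinality `𝔠` such that for
every countable `A ⊆ S` there is an ordinal `β < 𝔠` above all elements of `A` with
`k {α, β} = 1` for all `α ∈ A`, then there are disjoint sets `A, B` of ordinals below `𝔠`,
each of order type `ω₁`, with `sup A = sup B`, such that `k {α, β} = 1` whenever `α ∈ A`,
`β ∈ B`, `α < β` (an `(ω₁;ω₁)`-type half graph homogeneous in color `1`). -/
theorem stmt8 (k : Ordinal.{u} → Ordinal.{u} → Fin 2)
    (S : Set Ordinal.{u}) (hSsub : S ⊆ Set.Iio continuum.{u}.ord)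
    (hScard : Cardinal.mk S = continuum)
    (hS : ∀ A ⊆ S, A.Countable → ∃ β < continuum.{u}.ord,
        (∀ α ∈ A, α < β) ∧ ∀ α ∈ A, k α β = 1) :
    ∃ A B : Set Ordinal.{u}, A ⊆ Set.Iio continuum.{u}.ord ∧ B ⊆ Set.Iio continuum.{u}.ord ∧
      Disjoint A B ∧ HasOrderTypeOmega1 A ∧ HasOrderTypeOmega1 B ∧ sSup A = sSup B ∧
      ∀ α ∈ A, ∀ β ∈ B, α < β → k α β = 1 := by
  classical
  -- witness function for countable subsets of S
  have hW : ∀ A : Set Ordinal.{u}, ∃ β : Ordinal.{u}, A ⊆ S → A.Countable →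
      β < continuum.{u}.ord ∧ (∀ α ∈ A, α < β) ∧ ∀ α ∈ A, k α β = 1 := by
    intro A
    by_cases h : A ⊆ S ∧ A.Countable
    · obtain ⟨β, h1, h2, h3⟩ := hS A h.1 h.2
      exact ⟨β, fun _ _ => ⟨h1, h2, h3⟩⟩
    · exact ⟨0, fun h1 h2 => absurd ⟨h1, h2⟩ h⟩
  choose w hw using hW
  -- next element of S above a given ordinal
  have hN : ∀ γ : Ordinal.{u}, ∃ s : Ordinal.{u}, γ < continuum.{u}.ord → s ∈ S ∧ γ < s := by
    intro γ
    by_cases h : γ < continuum.{u}.ord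
    · obtain ⟨s, hs1, hs2⟩ := aux_unbdd S hScard γ h
      exact ⟨s, fun _ => ⟨hs1, hs2⟩⟩
    · exact ⟨0, fun h1 => absurd h1 h⟩
  choose n hn using hN
  -- the transfinite recursion
  let a : Ordinal.{u} → Ordinal.{u} :=
    Ordinal.lt_wf.fix (fun ξ ih => n (w {z | ∃ η, ∃ h : η < ξ, ih η h = z}))
  have ha : ∀ ξ, a ξ = n (w (a '' Set.Iio ξ)) := by
    intro ξ
    have := Ordinal.lt_wf.fix_eq (fun ξ ih => n (w {z | ∃ η, ∃ h : η < ξ, ih η h = z})) ξ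
    rw [show a ξ = _ from this]
    congr 2
    ext z
    simp only [Set.mem_setOf_eq, Set.mem_image, Set.mem_Iio]
    constructor
    · rintro ⟨η, h, rfl⟩; exact ⟨η, h, rfl⟩
    · rintro ⟨η, h, rfl⟩; exact ⟨η, h, rfl⟩
  set b : Ordinal.{u} → Ordinal.{u} := fun ξ => w (a '' Set.Iio ξ) with hb
  set ω₁ : Ordinal.{u} := (aleph.{u} 1).ord with hω₁
  have hω₁lim : Order.IsSuccLimit ω₁ := Cardinal.isSuccLimit_ord (aleph0_le_aleph 1)
  -- main induction
  have main : ∀ ξ, ξ < ω₁ → a ξ ∈ S ∧ b ξ < continuum.{u}.ord ∧ b ξ < a ξ ∧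
      ∀ η < ξ, a η < b ξ ∧ k (a η) (b ξ) = 1 := by
    intro ξ
    induction ξ using Ordinal.induction with
    | h ξ IH =>
      intro hξ
      have hsub : a '' Set.Iio ξ ⊆ S := by
        rintro _ ⟨η, hη, rfl⟩
        exact (IH η hη (hη.trans hξ)).1
      have hcount : (a '' Set.Iio ξ).Countable := by
        refine Set.Countable.image ?_ a
        rw [Cardinal.countable_iff_lt_aleph_one, Ordinal.mk_Iio_ordinal]
        rw [Cardinal.lift_lt_aleph_one]
        exact Cardinal.lt_ord.mp hξ
      obtain ⟨hb1, hb2, hb3⟩ := hw (a '' Set.Iio ξ) hsub hcount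
      obtain ⟨hn1, hn2⟩ := hn (w (a '' Set.Iio ξ)) hb1
      rw [← ha] at hn1 hn2
      refine ⟨hn1, hb1, hn2, fun η hη => ⟨?_, ?_⟩⟩
      · exact hb2 _ (Set.mem_image_of_mem a hη)
      · exact hb3 _ (Set.mem_image_of_mem a hη)
  have haS : ∀ ξ < ω₁, a ξ ∈ S := fun ξ hξ => (main ξ hξ).1
  have hbc : ∀ ξ < ω₁, b ξ < continuum.{u}.ord := fun ξ hξ => (main ξ hξ).2.1
  have hba : ∀ ξ < ω₁, b ξ < a ξ := fun ξ hξ => (main ξ hξ).2.2.1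
  have hab : ∀ η ξ, η < ξ → ξ < ω₁ → a η < b ξ := fun η ξ h hξ => ((main ξ hξ).2.2.2 η h).1
  have hk1 : ∀ η ξ, η < ξ → ξ < ω₁ → k (a η) (b ξ) = 1 :=
    fun η ξ h hξ => ((main ξ hξ).2.2.2 η h).2
  have haa : ∀ η ξ, η < ξ → ξ < ω₁ → a η < a ξ :=
    fun η ξ h hξ => (hab η ξ h hξ).trans (hba ξ hξ)
  have hbb : ∀ η ξ, η < ξ → ξ < ω₁ → b η < b ξ :=
    fun η ξ h hξ => (hba η (h.trans hξ)).trans (hab η ξ h hξ)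
  refine ⟨a '' Set.Iio ω₁, b '' Set.Iio ω₁, ?_, ?_, ?_, ?_, ?_, ?_, ?_⟩
  · rintro _ ⟨ξ, hξ, rfl⟩
    exact hSsub (haS ξ hξ)
  · rintro _ ⟨ξ, hξ, rfl⟩
    exact hbc ξ hξ
  · rw [Set.disjoint_left]
    rintro _ ⟨η, hη, rfl⟩ ⟨ξ, hξ, heq⟩
    rcases lt_trichotomy η ξ with h | h | h
    · exact absurd heq (hab η ξ h hξ).ne'
    · subst h; exact absurd heq (hba η hη).ne
    · exact absurd heq ((hba ξ hξ).trans (haa ξ η h hη)).ne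
  · exact aux_hasOrderTypeOmega1_image a haa
  · exact aux_hasOrderTypeOmega1_image b hbb
  · have hAne : (a '' Set.Iio ω₁).Nonempty := ⟨a 0, Set.mem_image_of_mem a hω₁lim.pos⟩
    have hBne : (b '' Set.Iio ω₁).Nonempty := ⟨b 0, Set.mem_image_of_mem b hω₁lim.pos⟩
    have hAbdd : BddAbove (a '' Set.Iio ω₁) := by
      refine ⟨continuum.{u}.ord, ?_⟩
      rintro _ ⟨ξ, hξ, rfl⟩
      exact le_of_lt (hSsub (haS ξ hξ))
    have hBbdd : BddAbove (b '' Set.Iio ω₁) := by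
      refine ⟨continuum.{u}.ord, ?_⟩
      rintro _ ⟨ξ, hξ, rfl⟩
      exact le_of_lt (hbc ξ hξ)
    apply le_antisymm
    · apply csSup_le hAne
      rintro _ ⟨ξ, hξ, rfl⟩
      have hsucc : ξ + 1 < ω₁ := by
        rw [Ordinal.add_one_eq_succ]; exact hω₁lim.succ_lt hξ
      exact le_of_lt (lt_of_lt_of_le (hab ξ (ξ + 1) (lt_add_one ξ) hsucc)
        (le_csSup hBbdd (Set.mem_image_of_mem b hsucc)))
    · apply csSup_le hBne
      rintro _ ⟨ξ, hξ, rfl⟩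
      exact le_of_lt (lt_of_lt_of_le (hba ξ hξ) (le_csSup hAbdd (Set.mem_image_of_mem a hξ)))
  · rintro _ ⟨η, hη, rfl⟩ _ ⟨ξ, hξ, rfl⟩ hlt
    rcases lt_trichotomy η ξ with h | h | h
    · exact hk1 η ξ h hξ
    · subst h; exact absurd hlt (not_lt_of_gt (hba η hη))
    · exact absurd hlt (not_lt_of_gt ((hba ξ hξ).trans (haa ξ η h hη)))
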